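/- For every ε > 0 there is a constant C_ε such that for all positive integers k, r with gcd(k, r) = 1, the Gauss sum G(k, r) = Σ_{l ∈ [k], gcd(l, k) = 1} e(r l^2 / k) satisfies |G(k, r)| ≤ C_ε k^{1/2 + ε}. -/

import Mathlib

/-- `e x = exp(2πi x)`. -/
noncomputable def e (x : ℝ) : ℂ := Complex.exp (2 * Real.pi * Complex.I * x)

/-- The Gauss sum over reduced residues: `G k r = Σ_{l ∈ [k], (l,k)=1} e(r l² / k)`. -/
noncomputable def G (k r : ℕ) : ℂ :=
  ∑ l ∈ (Finset.Icc 1 k).filter (fun l => Nat.gcd l k = 1),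
    e (((r * l ^ 2 : ℕ) : ℝ) / k)

open Finset

noncomputable def eZ (n : ℕ) (a : ℤ) : ℂ := e ((a : ℝ) / n)

lemma e_add (x y : ℝ) : e (x + y) = e x * e y := by
  rw [e, e, e, ← Complex.exp_add]
  congr 1
  push_cast
  ring

lemma e_int (m : ℤ) : e m = 1 := by
  rw [e, show 2 * (Real.pi:ℂ) * Complex.I * (m:ℝ) = m * (2 * Real.pi * Complex.I) by push_cast; ring]
  exact Complex.exp_int_mul_two_pi_mul_I m

lemma abs_e (x : ℝ) : ‖e x‖ = 1 := by
  rw [e, show 2 * (Real.pi:ℂ) * Complex.I * x = (2 * Real.pi * x : ℝ) * Complex.I by push_cast; ring]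
  exact Complex.norm_exp_ofReal_mul_I _

lemma conj_e (x : ℝ) : (starRingEnd ℂ) (e x) = e (-x) := by
  rw [e, e, ← Complex.exp_conj]
  congr 1
  simp only [map_mul, Complex.conj_I, Complex.conj_ofReal, map_ofNat]
  push_cast
  ring

lemma two_pi_I_ne : (2 * (Real.pi:ℂ) * Complex.I) ≠ 0 := by
  simp [Real.pi_ne_zero, Complex.I_ne_zero]

lemma e_eq_one_iff {x : ℝ} : e x = 1 ↔ ∃ m : ℤ, x = m := by
  rw [e, Complex.exp_eq_one_iff]
  constructor
  · rintro ⟨m, hm⟩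
    refine ⟨m, ?_⟩
    have h : (x : ℂ) * (2 * Real.pi * Complex.I) = (m : ℂ) * (2 * Real.pi * Complex.I) := by
      rw [← hm]; ring
    have := mul_right_cancel₀ two_pi_I_ne h
    exact_mod_cast this
  · rintro ⟨m, rfl⟩
    exact ⟨m, by push_cast; ring⟩

lemma e_pow (x : ℝ) (m : ℕ) : e (m * x) = e x ^ m := by
  rw [e, e, ← Complex.exp_nat_mul]
  congr 1
  push_cast
  ring

lemma eZ_add (n : ℕ) (a b : ℤ) : eZ n (a + b) = eZ n a * eZ n b := by
  rw [eZ, eZ, eZ, ← e_add]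
  congr 1
  push_cast
  ring

lemma eZ_dvd {n : ℕ} {a : ℤ} (hn : 0 < n) (h : (n:ℤ) ∣ a) : eZ n a = 1 := by
  obtain ⟨t, rfl⟩ := h
  rw [eZ]
  have hn' : (n:ℝ) ≠ 0 := Nat.cast_ne_zero.2 hn.ne'
  rw [show (((n:ℤ) * t : ℤ) : ℝ) / n = (t : ℝ) by push_cast; field_simp]
  exact e_int t

lemma eZ_congr {n : ℕ} (hn : 0 < n) {a b : ℤ} (h : (n:ℤ) ∣ (a - b)) : eZ n a = eZ n b := by
  have : a = b + (a - b) := by ring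
  rw [this, eZ_add, eZ_dvd hn h, mul_one]

lemma abs_eZ (n : ℕ) (a : ℤ) : ‖eZ n a‖ = 1 := abs_e _

lemma conj_eZ (n : ℕ) (a : ℤ) : (starRingEnd ℂ) (eZ n a) = eZ n (-a) := by
  rw [eZ, eZ, conj_e]
  congr 1
  push_cast
  ring

lemma eZ_mul_nat (n : ℕ) (c : ℤ) (m : ℕ) : eZ n (c * m) = eZ n c ^ m := by
  rw [eZ, eZ, show ((c * (m:ℤ) : ℤ) : ℝ) / n = (m:ℝ) * ((c:ℝ)/n) by push_cast; ring]
  exact e_pow _ m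

lemma eZ_one_iff {n : ℕ} (hn : 0 < n) {c : ℤ} : eZ n c = 1 ↔ (n:ℤ) ∣ c := by
  constructor
  · intro h
    rw [eZ, e_eq_one_iff] at h
    obtain ⟨m, hm⟩ := h
    have hn' : (n:ℝ) ≠ 0 := Nat.cast_ne_zero.2 hn.ne'
    have : (c:ℝ) = n * m := by field_simp at hm; linarith [hm]
    exact ⟨m, by exact_mod_cast this⟩
  · exact eZ_dvd hn

lemma sum_eZ (n : ℕ) (hn : 0 < n) (c : ℤ) :
    ∑ m ∈ range n, eZ n (c * m) = if (n:ℤ) ∣ c then (n:ℂ) else 0 := by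
  simp_rw [eZ_mul_nat]
  by_cases h : (n:ℤ) ∣ c
  · simp [eZ_dvd hn h, h]
  · rw [if_neg h]
    have hz : eZ n c ≠ 1 := fun hc => h ((eZ_one_iff hn).1 hc)
    rw [geom_sum_eq hz]
    have : eZ n c ^ n = 1 := by
      rw [← eZ_mul_nat, mul_comm]
      exact eZ_dvd hn ⟨c, rfl⟩
    simp [this]

lemma sum_range_shift {n : ℕ} (f : ℕ → ℂ) (hf : ∀ m, f (m + n) = f m) (h : ℕ) :
    ∑ m ∈ range n, f (m + h) = ∑ m ∈ range n, f m := by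
  induction h with
  | zero => simp
  | succ h ih =>
    have key : ∀ g : ℕ → ℂ, (∀ m, g (m + n) = g m) →
        ∑ m ∈ range n, g (m + 1) = ∑ m ∈ range n, g m := by
      intro g hg
      have h2 := Finset.sum_range_succ' g n
      rw [Finset.sum_range_succ] at h2
      have hg0 : g n = g 0 := by simpa using hg 0
      rw [hg0] at h2
      exact (add_right_cancel h2.symm)
    have := key (fun m => f (m + h)) (fun m => by
      rw [show m + n + h = m + h + n by ring, hf])
    calc ∑ m ∈ range n, f (m + (h + 1)) = ∑ m ∈ range n, f (m + 1 + h) := by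
          apply Finset.sum_congr rfl; intro m _; congr 1; ring
      _ = ∑ m ∈ range n, f (m + h) := this
      _ = ∑ m ∈ range n, f m := ih

-- number of h < n with n ∣ c*h is at most gcd c n
lemma count_le_gcd (n c : ℕ) (hn : 0 < n) (hc : 0 < c) :
    #{h ∈ range n | n ∣ c * h} ≤ Nat.gcd c n := by
  have hgpos : 0 < Nat.gcd c n := Nat.gcd_pos_of_pos_left _ hc
  have hgn : Nat.gcd c n ∣ n := Nat.gcd_dvd_right c n
  have hspos : 0 < n / Nat.gcd c n := Nat.div_pos (Nat.le_of_dvd hn hgn) hgpos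
  have hsg : n / Nat.gcd c n * Nat.gcd c n = n := Nat.div_mul_cancel hgn
  have hdvd : ∀ h, n ∣ c * h → n / Nat.gcd c n ∣ h := by
    intro h hh
    have hcop : Nat.Coprime (n / Nat.gcd c n) (c / Nat.gcd c n) := by
      have h0 : 0 < Nat.gcd n c := by rw [Nat.gcd_comm]; exact hgpos
      have h1 := Nat.coprime_div_gcd_div_gcd h0
      rwa [Nat.gcd_comm n c] at h1
    have h1 : n / Nat.gcd c n ∣ (c / Nat.gcd c n) * h := by
      obtain ⟨t, ht⟩ := hh
      refine ⟨t, ?_⟩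
      have hgc : Nat.gcd c n ∣ c := Nat.gcd_dvd_left c n
      calc c / Nat.gcd c n * h = h * (c / Nat.gcd c n) := by ring
        _ = h * c / Nat.gcd c n := (Nat.mul_div_assoc h hgc).symm
        _ = n * t / Nat.gcd c n := by rw [mul_comm h c, ht]
        _ = t * n / Nat.gcd c n := by rw [mul_comm n t]
        _ = t * (n / Nat.gcd c n) := Nat.mul_div_assoc t hgn
        _ = n / Nat.gcd c n * t := by ring
    exact hcop.dvd_of_dvd_mul_left h1
  have hsub : {h ∈ range n | n ∣ c * h} ⊆ {h ∈ range n | n / Nat.gcd c n ∣ h} := by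
    intro h hh
    simp only [mem_filter, mem_range] at *
    exact ⟨hh.1, hdvd h hh.2⟩
  refine le_trans (Finset.card_le_card hsub) ?_
  have hmem : ∀ h ∈ {h ∈ range n | n / Nat.gcd c n ∣ h},
      h / (n / Nat.gcd c n) ∈ range (Nat.gcd c n) := by
    intro h hh
    simp only [mem_filter, mem_range] at *
    rw [Nat.div_lt_iff_lt_mul hspos]
    calc h < n := hh.1
      _ = Nat.gcd c n * (n / Nat.gcd c n) := (Nat.mul_div_cancel' hgn).symm
  have hinj : ∀ h₁ ∈ {h ∈ range n | n / Nat.gcd c n ∣ h},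
      ∀ h₂ ∈ {h ∈ range n | n / Nat.gcd c n ∣ h},
      h₁ / (n / Nat.gcd c n) = h₂ / (n / Nat.gcd c n) → h₁ = h₂ := by
    intro h₁ hh₁ h₂ hh₂ heq
    simp only [mem_filter, mem_range] at *
    rw [← Nat.div_mul_cancel hh₁.2, ← Nat.div_mul_cancel hh₂.2, heq]
  simpa using Finset.card_le_card_of_injOn _ hmem hinj

lemma gauss_sq (n : ℕ) (hn : 0 < n) (a : ℤ) :
    ‖∑ m ∈ range n, eZ n (a * (m:ℤ)^2)‖ ^ 2
      ≤ (n : ℝ) * #((range n).filter (fun h : ℕ => (n:ℤ) ∣ 2*a*(h:ℤ))) := by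
  set S := ∑ m ∈ range n, eZ n (a * (m:ℤ)^2) with hS
  have hconj : (starRingEnd ℂ) S = ∑ m ∈ range n, eZ n (-(a * (m:ℤ)^2)) := by
    rw [hS, map_sum]; exact Finset.sum_congr rfl fun m _ => conj_eZ n _
  have key : S * (starRingEnd ℂ) S
      = ∑ h ∈ range n, eZ n (a * (h:ℤ)^2) * (if (n:ℤ) ∣ 2*a*h then (n:ℂ) else 0) := by
    rw [hconj, hS, Finset.sum_mul_sum]
    calc (∑ x ∈ range n, ∑ y ∈ range n, eZ n (a*(x:ℤ)^2) * eZ n (-(a*(y:ℤ)^2)))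
        = ∑ x ∈ range n, ∑ y ∈ range n, eZ n (a*(x:ℤ)^2 - a*(y:ℤ)^2) := by
          exact Finset.sum_congr rfl fun x _ => Finset.sum_congr rfl fun y _ => by
            rw [← eZ_add, sub_eq_add_neg]
      _ = ∑ y ∈ range n, ∑ x ∈ range n, eZ n (a*(x:ℤ)^2 - a*(y:ℤ)^2) := Finset.sum_comm
      _ = ∑ y ∈ range n, ∑ h ∈ range n, eZ n (a*((h+y:ℕ):ℤ)^2 - a*(y:ℤ)^2) := by
          refine Finset.sum_congr rfl fun y _ => ?_
          exact (sum_range_shift (fun x => eZ n (a*(x:ℤ)^2 - a*(y:ℤ)^2))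
            (fun m => eZ_congr hn ⟨a*(2*(m:ℤ)+(n:ℤ)), by push_cast; ring⟩) y).symm
      _ = ∑ y ∈ range n, ∑ h ∈ range n, eZ n (a*(h:ℤ)^2) * eZ n ((2*a*h) * (y:ℤ)) := by
          refine Finset.sum_congr rfl fun y _ => Finset.sum_congr rfl fun h _ => ?_
          rw [← eZ_add]; congr 1; push_cast; ring
      _ = ∑ h ∈ range n, ∑ y ∈ range n, eZ n (a*(h:ℤ)^2) * eZ n ((2*a*h) * (y:ℤ)) :=
          Finset.sum_comm
      _ = ∑ h ∈ range n, eZ n (a*(h:ℤ)^2) * (if (n:ℤ) ∣ 2*a*h then (n:ℂ) else 0) := by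
          refine Finset.sum_congr rfl fun h _ => ?_
          rw [← Finset.mul_sum, sum_eZ n hn]
  have habs : ‖S‖ ^ 2 = ‖S * (starRingEnd ℂ) S‖ := by
    rw [norm_mul, Complex.norm_conj, sq]
  rw [habs, key]
  refine le_trans (norm_sum_le _ _) ?_
  have : ∀ h ∈ range n,
      ‖eZ n (a*(h:ℤ)^2) * (if (n:ℤ) ∣ 2*a*h then (n:ℂ) else 0)‖
        = if (n:ℤ) ∣ 2*a*h then (n:ℝ) else 0 := by
    intro h _
    rw [norm_mul, abs_eZ, one_mul]
    split_ifs <;> simp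
  rw [Finset.sum_congr rfl this, ← Finset.sum_filter, Finset.sum_const, nsmul_eq_mul]
  rw [mul_comm]

lemma gauss_le (n : ℕ) (hn : 0 < n) (c : ℕ) (hc : 0 < c) :
    ‖∑ m ∈ range n, eZ n ((c:ℤ) * (m:ℤ)^2)‖
      ≤ Real.sqrt ((n : ℝ) * (Nat.gcd (2*c) n : ℝ)) := by
  have hstep : ‖∑ m ∈ range n, eZ n ((c:ℤ) * (m:ℤ)^2)‖ ^ 2
      ≤ (n : ℝ) * (Nat.gcd (2*c) n : ℝ) := by
    refine le_trans (gauss_sq n hn (c:ℤ)) ?_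
    have hfilter : ((range n).filter (fun h : ℕ => (n:ℤ) ∣ 2*(c:ℤ)*(h:ℤ)))
        = ((range n).filter (fun h : ℕ => n ∣ 2*c*h)) := by
      apply Finset.filter_congr
      intro h _
      constructor
      · intro hd
        have h1 : ((n:ℤ)) ∣ ((2*c*h : ℕ) : ℤ) := by push_cast; exact hd
        exact_mod_cast h1
      · intro hd
        have h1 := Int.natCast_dvd_natCast.2 hd
        push_cast at h1
        exact h1
    rw [hfilter]
    have hcount := count_le_gcd n (2*c) hn (by omega)
    have h2 : ((#((range n).filter (fun h : ℕ => n ∣ 2*c*h)) : ℕ) : ℝ)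
        ≤ (Nat.gcd (2*c) n : ℝ) := by exact_mod_cast hcount
    exact mul_le_mul_of_nonneg_left h2 (by positivity)
  calc ‖∑ m ∈ range n, eZ n ((c:ℤ) * (m:ℤ)^2)‖
      = Real.sqrt (‖∑ m ∈ range n, eZ n ((c:ℤ) * (m:ℤ)^2)‖ ^ 2) :=
        (Real.sqrt_sq (norm_nonneg _)).symm
    _ ≤ Real.sqrt ((n : ℝ) * (Nat.gcd (2*c) n : ℝ)) := Real.sqrt_le_sqrt hstep

lemma card_divisors_le_rpow (ε : ℝ) (hε : 0 < ε) :
    ∃ C : ℝ, 0 < C ∧ ∀ k : ℕ, 0 < k → (#k.divisors : ℝ) ≤ C * (k:ℝ) ^ ε := by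
  set M : ℝ := max 1 (1 / (ε * Real.log 2)) with hM
  have hM1 : 1 ≤ M := le_max_left _ _
  have hlog2 : 0 < Real.log 2 := Real.log_pos (by norm_num)
  have hMε : 1 ≤ M * (ε * Real.log 2) := by
    have : 1 / (ε * Real.log 2) ≤ M := le_max_right _ _
    calc 1 = (1 / (ε * Real.log 2)) * (ε * Real.log 2) := by field_simp
      _ ≤ M * (ε * Real.log 2) := by
          apply mul_le_mul_of_nonneg_right this (by positivity)
  set N : ℕ := ⌈(2:ℝ) ^ (1/ε)⌉₊ with hN
  refine ⟨M ^ N, by positivity, ?_⟩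
  intro k hk
  have hk0 : k ≠ 0 := hk.ne'
  -- per-prime inequality
  have hper : ∀ p ∈ k.primeFactors, ((k.factorization p + 1 : ℕ) : ℝ)
      ≤ (if (p:ℝ) ^ ε < 2 then M else 1) * (p:ℝ) ^ ((k.factorization p : ℝ) * ε) := by
    intro p hp
    have hpp : p.Prime := Nat.prime_of_mem_primeFactors hp
    have hp2 : (2:ℝ) ≤ (p:ℝ) := by exact_mod_cast hpp.two_le
    have hp0 : (0:ℝ) < p := by linarith
    set a : ℕ := k.factorization p with ha
    by_cases hsmall : (p:ℝ) ^ ε < 2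
    · rw [if_pos hsmall]
      have hexp : (p:ℝ) ^ ((a:ℝ) * ε) = Real.exp ((a:ℝ) * ε * Real.log p) := by
        rw [Real.rpow_def_of_pos hp0]; ring_nf
      have h1 : 1 + (a:ℝ) * ε * Real.log 2 ≤ (p:ℝ) ^ ((a:ℝ) * ε) := by
        rw [hexp]
        refine le_trans ?_ (Real.add_one_le_exp _)
        have : Real.log 2 ≤ Real.log p := Real.log_le_log (by norm_num) hp2
        have haε : 0 ≤ (a:ℝ) * ε := by positivity
        nlinarith
      have h2 : ((a + 1 : ℕ) : ℝ) ≤ M * (1 + (a:ℝ) * ε * Real.log 2) := by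
        push_cast
        nlinarith [Nat.cast_nonneg (α := ℝ) a]
      calc ((a + 1 : ℕ) : ℝ) ≤ M * (1 + (a:ℝ) * ε * Real.log 2) := h2
        _ ≤ M * (p:ℝ) ^ ((a:ℝ) * ε) := by
            apply mul_le_mul_of_nonneg_left h1 (by linarith)
    · rw [if_neg hsmall, one_mul]
      have h2 : (2:ℝ) ≤ (p:ℝ) ^ ε := not_lt.1 hsmall
      calc ((a + 1 : ℕ) : ℝ) ≤ (2:ℝ) ^ (a:ℕ) := by
            exact_mod_cast Nat.lt_two_pow_self (n := a)
        _ ≤ ((p:ℝ) ^ ε) ^ (a:ℕ) := pow_le_pow_left₀ (by norm_num) h2 a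
        _ = (p:ℝ) ^ ((a:ℝ) * ε) := by
            rw [← Real.rpow_natCast ((p:ℝ) ^ ε) a, ← Real.rpow_mul (le_of_lt hp0), mul_comm]
  have hcard : (#k.divisors : ℝ) = ∏ p ∈ k.primeFactors, ((k.factorization p + 1 : ℕ) : ℝ) := by
    rw [Nat.card_divisors hk0]
    push_cast
    rfl
  have h1 : k = ∏ p ∈ k.primeFactors, p ^ (k.factorization p : ℕ) := by
    rw [← Nat.support_factorization]
    exact (Nat.factorization_prod_pow_eq_self hk0).symm
  have hkval : (k:ℝ) = ∏ p ∈ k.primeFactors, (p:ℝ) ^ (k.factorization p : ℕ) := by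
    exact_mod_cast congrArg (fun m : ℕ => (m:ℝ)) h1
  have hkrpow : (k:ℝ) ^ ε = ∏ p ∈ k.primeFactors, (p:ℝ) ^ ((k.factorization p : ℝ) * ε) := by
    rw [hkval, ← Real.finset_prod_rpow _ _ (fun p _ => by positivity) ε]
    refine Finset.prod_congr rfl fun p hp => ?_
    rw [← Real.rpow_natCast (p:ℝ) (k.factorization p), ← Real.rpow_mul (Nat.cast_nonneg p)]
  have hsmallcount : #(k.primeFactors.filter (fun p : ℕ => (p:ℝ) ^ ε < 2)) ≤ N := by
    have hsub : k.primeFactors.filter (fun p : ℕ => (p:ℝ) ^ ε < 2) ⊆ range N := by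
      intro p hp
      simp only [mem_filter] at hp
      have hpp : p.Prime := Nat.prime_of_mem_primeFactors hp.1
      have hp0 : (0:ℝ) < p := by exact_mod_cast hpp.pos
      have hlt : (p:ℝ) < (2:ℝ) ^ (1/ε) := by
        have h1 : ((p:ℝ) ^ ε) ^ (1/ε) < (2:ℝ) ^ (1/ε) :=
          Real.rpow_lt_rpow (by positivity) hp.2 (by positivity)
        rwa [← Real.rpow_mul (le_of_lt hp0), mul_one_div_cancel hε.ne', Real.rpow_one] at h1
      have : (p:ℝ) < (N:ℝ) := lt_of_lt_of_le hlt (Nat.le_ceil _)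
      exact mem_range.2 (by exact_mod_cast this)
    calc #(k.primeFactors.filter (fun p : ℕ => (p:ℝ) ^ ε < 2)) ≤ #(range N) :=
          Finset.card_le_card hsub
      _ = N := card_range N
  calc (#k.divisors : ℝ) = ∏ p ∈ k.primeFactors, ((k.factorization p + 1 : ℕ) : ℝ) := hcard
    _ ≤ ∏ p ∈ k.primeFactors,
          ((if (p:ℝ) ^ ε < 2 then M else 1) * (p:ℝ) ^ ((k.factorization p : ℝ) * ε)) :=
        Finset.prod_le_prod (fun p _ => by positivity) hper
    _ = (∏ p ∈ k.primeFactors, (if (p:ℝ) ^ ε < 2 then M else 1))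
          * ∏ p ∈ k.primeFactors, (p:ℝ) ^ ((k.factorization p : ℝ) * ε) :=
        Finset.prod_mul_distrib
    _ ≤ M ^ N * (k:ℝ) ^ ε := by
        rw [← hkrpow]
        apply mul_le_mul_of_nonneg_right ?_ (Real.rpow_nonneg (Nat.cast_nonneg k) ε)
        calc (∏ p ∈ k.primeFactors, (if (p:ℝ) ^ ε < 2 then M else 1))
            = M ^ #(k.primeFactors.filter (fun p : ℕ => (p:ℝ) ^ ε < 2)) := by
              rw [Finset.prod_ite, Finset.prod_const, Finset.prod_const_one, mul_one]
          _ ≤ M ^ N := pow_le_pow_right₀ hM1 hsmallcount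

open ArithmeticFunction in
lemma moebius_sum (m : ℕ) :
    (∑ d ∈ m.divisors, moebius d : ℤ) = if m = 1 then 1 else 0 := by
  have h := congrArg (fun f : ArithmeticFunction ℤ => f m) moebius_mul_coe_zeta
  rw [coe_mul_zeta_apply] at h
  rw [h, one_apply]

open ArithmeticFunction in
lemma abs_moebius_le (d : ℕ) : ‖((moebius d : ℤ) : ℂ)‖ ≤ 1 := by
  rcases eq_or_ne (moebius d) 0 with h | h
  · simp [h]
  · rcases moebius_ne_zero_iff_eq_or.1 h with h | h <;> simp [h]

lemma eZ_cancel (d n : ℕ) (hd : 0 < d) (b : ℤ) : eZ (d*n) ((d:ℤ)*b) = eZ n b := by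
  unfold eZ
  congr 1
  push_cast
  rw [mul_div_mul_left _ _ (by exact_mod_cast hd.ne')]

open ArithmeticFunction in
theorem gauss_sum_bound (ε : ℝ) (hε : 0 < ε) :
    ∃ C : ℝ, ∀ k r : ℕ, 0 < k → 0 < r → Nat.gcd k r = 1 →
      ‖G k r‖ ≤ C * (k : ℝ) ^ ((1 : ℝ) / 2 + ε) := by
  obtain ⟨C1, hC1pos, hC1⟩ := card_divisors_le_rpow ε hε
  refine ⟨C1 * Real.sqrt 2, ?_⟩
  intro k r hk hr hgcd
  have hk0 : k ≠ 0 := hk.ne'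
  -- rewrite G in terms of eZ
  have hG : G k r = ∑ l ∈ (Finset.Icc 1 k).filter (fun l => Nat.gcd l k = 1),
      eZ k ((r:ℤ) * (l:ℤ)^2) := by
    refine Finset.sum_congr rfl fun l _ => ?_
    unfold eZ
    congr 1
  -- Möbius decomposition
  have hdecomp : G k r = ∑ d ∈ k.divisors, ((moebius d : ℤ) : ℂ) *
      ∑ m ∈ Finset.Icc 1 (k/d), eZ k ((r:ℤ) * ((d*m : ℕ):ℤ)^2) := by
    rw [hG, Finset.sum_filter]
    have step1 : ∀ l ∈ Finset.Icc 1 k,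
        (if Nat.gcd l k = 1 then eZ k ((r:ℤ)*(l:ℤ)^2) else 0)
        = ∑ d ∈ k.divisors,
            (if d ∣ l then ((moebius d : ℤ) : ℂ) else 0) * eZ k ((r:ℤ)*(l:ℤ)^2) := by
      intro l hl
      have hl1 : 1 ≤ l := (Finset.mem_Icc.1 hl).1
      have hgl : Nat.gcd l k ≠ 0 := Nat.gcd_ne_zero_right hk0
      have hsum : ∑ d ∈ k.divisors, (if d ∣ l then (moebius d) else (0:ℤ))
          = ∑ d ∈ (Nat.gcd l k).divisors, moebius d := by
        rw [← Finset.sum_filter]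
        apply Finset.sum_congr _ (fun _ _ => rfl)
        ext d
        simp only [Finset.mem_filter, Nat.mem_divisors]
        constructor
        · rintro ⟨⟨hdk, _⟩, hdl⟩
          exact ⟨Nat.dvd_gcd hdl hdk, hgl⟩
        · rintro ⟨hdg, _⟩
          exact ⟨⟨hdg.trans (Nat.gcd_dvd_right l k), hk0⟩, hdg.trans (Nat.gcd_dvd_left l k)⟩
      have hind : (if Nat.gcd l k = 1 then (1:ℂ) else 0)
          = ∑ d ∈ k.divisors, (if d ∣ l then ((moebius d : ℤ) : ℂ) else 0) := by
        have := congrArg (fun z : ℤ => (z : ℂ)) (hsum.trans (moebius_sum (Nat.gcd l k)))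
        push_cast at this
        rw [← this]
      calc (if Nat.gcd l k = 1 then eZ k ((r:ℤ)*(l:ℤ)^2) else 0)
          = (if Nat.gcd l k = 1 then (1:ℂ) else 0) * eZ k ((r:ℤ)*(l:ℤ)^2) := by
            split_ifs <;> simp
        _ = (∑ d ∈ k.divisors, (if d ∣ l then ((moebius d : ℤ) : ℂ) else 0))
              * eZ k ((r:ℤ)*(l:ℤ)^2) := by rw [← hind]
        _ = _ := Finset.sum_mul _ _ _
    rw [Finset.sum_congr rfl step1, Finset.sum_comm]
    refine Finset.sum_congr rfl fun d hd => ?_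
    obtain ⟨hdk, -⟩ := Nat.mem_divisors.1 hd
    have hdpos : 0 < d := Nat.pos_of_mem_divisors hd
    calc ∑ l ∈ Finset.Icc 1 k, (if d ∣ l then ((moebius d : ℤ):ℂ) else 0) * eZ k ((r:ℤ)*(l:ℤ)^2)
        = ∑ l ∈ (Finset.Icc 1 k).filter (fun l => d ∣ l),
            ((moebius d : ℤ):ℂ) * eZ k ((r:ℤ)*(l:ℤ)^2) := by
          rw [Finset.sum_filter]
          refine Finset.sum_congr rfl fun l _ => ?_
          split_ifs <;> simp
      _ = ∑ m ∈ Finset.Icc 1 (k/d), ((moebius d : ℤ):ℂ) * eZ k ((r:ℤ)*((d*m:ℕ):ℤ)^2) := by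
          refine Finset.sum_nbij' (fun l => l / d) (fun m => d * m) ?_ ?_ ?_ ?_ ?_
          · intro l hl
            simp only [Finset.mem_filter, Finset.mem_Icc] at hl
            obtain ⟨⟨h1, h2⟩, h3⟩ := hl
            simp only [Finset.mem_Icc]
            constructor
            · rw [Nat.one_le_div_iff hdpos]
              exact Nat.le_of_dvd (by omega) h3
            · exact Nat.div_le_div_right h2
          · intro m hm
            simp only [Finset.mem_Icc] at hm
            simp only [Finset.mem_filter, Finset.mem_Icc]
            refine ⟨⟨?_, ?_⟩, Dvd.intro m rfl⟩
            · exact Nat.succ_le_of_lt (Nat.mul_pos hdpos (by omega))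
            · calc d * m ≤ d * (k/d) := Nat.mul_le_mul_left d hm.2
                _ = k := Nat.mul_div_cancel' hdk
          · intro l hl
            simp only [Finset.mem_filter] at hl
            exact Nat.mul_div_cancel' hl.2
          · intro m hm
            exact Nat.mul_div_cancel_left m hdpos
          · intro l hl
            simp only [Finset.mem_filter] at hl
            congr 2
            rw [Nat.mul_div_cancel' hl.2]
      _ = ((moebius d : ℤ):ℂ) * ∑ m ∈ Finset.Icc 1 (k/d), eZ k ((r:ℤ)*((d*m:ℕ):ℤ)^2) :=
          (Finset.mul_sum _ _ _).symm
  -- bound each inner sum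
  have hinner : ∀ d ∈ k.divisors,
      ‖∑ m ∈ Finset.Icc 1 (k/d), eZ k ((r:ℤ) * ((d*m : ℕ):ℤ)^2)‖
        ≤ Real.sqrt (2 * k) := by
    intro d hd
    obtain ⟨hdk, -⟩ := Nat.mem_divisors.1 hd
    have hdpos : 0 < d := Nat.pos_of_mem_divisors hd
    set n := k / d with hn
    have hnpos : 0 < n := Nat.div_pos (Nat.le_of_dvd hk hdk) hdpos
    have hkn : k = d * n := (Nat.mul_div_cancel' hdk).symm
    set c := r * d with hc
    have hcpos : 0 < c := by positivity
    have heq : ∀ m : ℕ, eZ k ((r:ℤ) * ((d*m : ℕ):ℤ)^2) = eZ n ((c:ℤ) * (m:ℤ)^2) := by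
      intro m
      rw [hkn, hc, show ((r:ℤ) * ((d*m : ℕ):ℤ)^2) = (d:ℤ) * (((r*d:ℕ):ℤ) * (m:ℤ)^2) by
        push_cast; ring]
      exact eZ_cancel d n hdpos _
    have hper : ∀ m : ℕ, eZ n ((c:ℤ) * ((m+n:ℕ):ℤ)^2) = eZ n ((c:ℤ) * (m:ℤ)^2) := by
      intro m
      exact eZ_congr hnpos ⟨(c:ℤ)*(2*(m:ℤ)+(n:ℤ)), by push_cast; ring⟩
    have hicc : ∑ m ∈ Finset.Icc 1 n, eZ n ((c:ℤ) * (m:ℤ)^2)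
        = ∑ m ∈ range n, eZ n ((c:ℤ) * (m:ℤ)^2) := by
      rw [← Finset.Ico_add_one_right_eq_Icc, Finset.sum_Ico_eq_sum_range]
      calc ∑ m ∈ range n, eZ n ((c:ℤ) * ((1+m : ℕ):ℤ)^2)
          = ∑ m ∈ range n, (fun j : ℕ => eZ n ((c:ℤ) * (j:ℤ)^2)) (m + 1) := by
            refine Finset.sum_congr rfl fun m _ => ?_
            congr 2
            push_cast
            ring
        _ = ∑ m ∈ range n, eZ n ((c:ℤ) * (m:ℤ)^2) :=
            sum_range_shift (fun j : ℕ => eZ n ((c:ℤ) * (j:ℤ)^2)) (fun m => hper m) 1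
    rw [Finset.sum_congr rfl (fun m _ => heq m), hicc]
    refine le_trans (gauss_le n hnpos c hcpos) ?_
    apply Real.sqrt_le_sqrt
    -- n * gcd(2c, n) ≤ 2k
    have hrk : Nat.Coprime r k := (Nat.coprime_comm.1 hgcd)
    have hnk : n ∣ k := Nat.div_dvd_of_dvd hdk
    have hrn : Nat.Coprime r n := Nat.Coprime.coprime_dvd_right hnk hrk
    have hgcd2 : Nat.gcd (2*c) n = Nat.gcd (2*d) n := by
      rw [hc, show 2 * (r * d) = r * (2*d) by ring]
      exact Nat.Coprime.gcd_mul_left_cancel _ hrn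
    have hgle : Nat.gcd (2*c) n ≤ 2*d := by
      rw [hgcd2]
      exact Nat.le_of_dvd (by omega) (Nat.gcd_dvd_left _ _)
    have : (n : ℝ) * (Nat.gcd (2*c) n : ℝ) ≤ (n:ℝ) * (2*d : ℕ) := by
      apply mul_le_mul_of_nonneg_left (by exact_mod_cast hgle) (by positivity)
    refine le_trans this ?_
    have hnk2 : n * (2*d) = 2 * k := by rw [hkn]; ring
    exact_mod_cast hnk2.le
  -- combine
  have hGbound : ‖G k r‖ ≤ (#k.divisors : ℝ) * Real.sqrt (2*(k:ℝ)) := by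
    rw [hdecomp]
    refine le_trans (norm_sum_le _ _) ?_
    calc ∑ d ∈ k.divisors, ‖((moebius d : ℤ):ℂ) *
            ∑ m ∈ Finset.Icc 1 (k/d), eZ k ((r:ℤ) * ((d*m : ℕ):ℤ)^2)‖
        ≤ ∑ _d ∈ k.divisors, Real.sqrt (2*(k:ℝ)) := by
          refine Finset.sum_le_sum fun d hd => ?_
          rw [norm_mul]
          calc ‖((moebius d : ℤ):ℂ)‖
                * ‖∑ m ∈ Finset.Icc 1 (k/d), eZ k ((r:ℤ) * ((d*m : ℕ):ℤ)^2)‖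
              ≤ 1 * Real.sqrt (2*(k:ℝ)) :=
                mul_le_mul (abs_moebius_le d) (hinner d hd)
                  (norm_nonneg _) zero_le_one
            _ = Real.sqrt (2*(k:ℝ)) := one_mul _
      _ = (#k.divisors : ℝ) * Real.sqrt (2*(k:ℝ)) := by
          rw [Finset.sum_const, nsmul_eq_mul]
  refine le_trans hGbound ?_
  have hτ := hC1 k hk
  have hkpos : (0:ℝ) < (k:ℝ) := by exact_mod_cast hk
  have hsqrt : Real.sqrt (2*(k:ℝ)) = Real.sqrt 2 * (k:ℝ) ^ ((1:ℝ)/2) := by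
    rw [Real.sqrt_mul (by norm_num), Real.sqrt_eq_rpow ((k:ℝ))]
  calc (#k.divisors : ℝ) * Real.sqrt (2*(k:ℝ))
      ≤ (C1 * (k:ℝ)^ε) * (Real.sqrt 2 * (k:ℝ)^((1:ℝ)/2)) := by
        rw [hsqrt]
        exact mul_le_mul hτ le_rfl (by positivity) (by positivity)
    _ = (C1 * Real.sqrt 2) * ((k:ℝ)^ε * (k:ℝ)^((1:ℝ)/2)) := by ring
    _ = (C1 * Real.sqrt 2) * (k:ℝ)^((1:ℝ)/2 + ε) := by
        rw [← Real.rpow_add hkpos, add_comm ε ((1:ℝ)/2)]
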